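/- Let α < 0. Then there exists ε > 0 (depending on α) such that for all x ∈ (0, ε): 1 + (1+x)^α − (1−x)^{(1−α)/2} − (1+x)^{(1+α)/2} < ((α−1)²/4) x². -/

import Mathlib

open Set

private lemma hasDerivAt_one_add_rpow (p x : ℝ) (hx : 0 < 1 + x) :
    HasDerivAt (fun y : ℝ => (1 + y) ^ p) (p * (1 + x) ^ (p - 1)) x := by
  have h : HasDerivAt (fun y : ℝ => 1 + y) 1 x := (hasDerivAt_id x).const_add 1
  have := h.rpow_const (p := p) (Or.inl hx.ne')
  simpa using this

private lemma hasDerivAt_one_sub_rpow (p x : ℝ) (hx : 0 < 1 - x) :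
    HasDerivAt (fun y : ℝ => (1 - y) ^ p) (-(p * (1 - x) ^ (p - 1))) x := by
  have h : HasDerivAt (fun y : ℝ => 1 - y) (-1) x := (hasDerivAt_id x).const_sub 1
  have := h.rpow_const (p := p) (Or.inl hx.ne')
  have e : (-1) * p * (1 - x) ^ (p - 1) = -(p * (1 - x) ^ (p - 1)) := by ring
  simpa [e] using this

private lemma neg_of_deriv_neg (f f' : ℝ → ℝ) {ε : ℝ} (hε : 0 < ε)
    (hd : ∀ x ∈ Set.Icc (0 : ℝ) ε, HasDerivAt f (f' x) x)
    (h0 : f 0 = 0)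
    (hneg : ∀ x ∈ Set.Ioo (0 : ℝ) ε, f' x < 0) :
    ∀ x ∈ Set.Ioc (0 : ℝ) ε, f x < 0 := by
  have hc : ContinuousOn f (Set.Icc 0 ε) := fun x hx =>
    (hd x hx).continuousAt.continuousWithinAt
  have hanti : StrictAntiOn f (Set.Icc 0 ε) := by
    apply strictAntiOn_of_deriv_neg (convex_Icc 0 ε) hc
    intro x hx
    rw [interior_Icc] at hx
    rw [(hd x (Set.Ioo_subset_Icc_self hx)).deriv]
    exact hneg x hx
  intro x hx
  have := hanti (Set.left_mem_Icc.2 hε.le) (Set.Ioc_subset_Icc_self hx) hx.1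
  rwa [h0] at this

/-- Lemma 5.1: failure of the super-solution lower bound for `α < 0`. -/
theorem g_lower_bound_fails_neg_alpha (α : ℝ) (hα : α < 0) :
    ∃ ε > (0 : ℝ), ∀ x ∈ Set.Ioo (0 : ℝ) ε,
      1 + (1 + x) ^ α - (1 - x) ^ ((1 - α) / 2) - (1 + x) ^ ((1 + α) / 2) <
        (α - 1) ^ 2 / 4 * x ^ 2 := by
  set β : ℝ := (1 - α) / 2 with hβ
  set γ : ℝ := (1 + α) / 2 with hγ
  set q : ℝ := (α - 1) ^ 2 / 4 with hq
  set h3 : ℝ → ℝ := fun x =>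
    α * (α - 1) * (α - 2) * (1 + x) ^ (α - 3)
      + β * (β - 1) * (β - 2) * (1 - x) ^ (β - 3)
      - γ * (γ - 1) * (γ - 2) * (1 + x) ^ (γ - 3) with hh3
  set h2 : ℝ → ℝ := fun x =>
    α * (α - 1) * (1 + x) ^ (α - 2)
      - β * (β - 1) * (1 - x) ^ (β - 2)
      - γ * (γ - 1) * (1 + x) ^ (γ - 2) - 2 * q with hh2
  set h1 : ℝ → ℝ := fun x =>
    α * (1 + x) ^ (α - 1) + β * (1 - x) ^ (β - 1)
      - γ * (1 + x) ^ (γ - 1) - 2 * q * x with hh1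
  set h : ℝ → ℝ := fun x =>
    1 + (1 + x) ^ α - (1 - x) ^ β - (1 + x) ^ γ - q * x ^ 2 with hh
  -- h3 is continuous at 0 and negative there
  have h3zero : h3 0 = 3 / 4 * (α * (α - 1) * (α - 3)) := by
    simp [hh3, Real.one_rpow, hβ, hγ]
    ring
  have h3neg0 : h3 0 < 0 := by
    rw [h3zero]
    have h1' : α - 1 < 0 := by linarith
    have h3' : α - 3 < 0 := by linarith
    nlinarith [mul_pos_of_neg_of_neg hα h1']
  have h3cont : ContinuousAt h3 0 := by
    have c1 : ContinuousAt (fun x : ℝ => (1 + x) ^ (α - 3)) 0 := by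
      apply ContinuousAt.rpow_const (by fun_prop)
      left; norm_num
    have c2 : ContinuousAt (fun x : ℝ => (1 - x) ^ (β - 3)) 0 := by
      apply ContinuousAt.rpow_const (by fun_prop)
      left; norm_num
    have c3 : ContinuousAt (fun x : ℝ => (1 + x) ^ (γ - 3)) 0 := by
      apply ContinuousAt.rpow_const (by fun_prop)
      left; norm_num
    exact ((c1.const_mul _).add (c2.const_mul _)).sub (c3.const_mul _)
  have hev : ∀ᶠ x in nhds (0 : ℝ), h3 x < 0 := h3cont.eventually (gt_mem_nhds h3neg0)
  obtain ⟨δ, hδ, hδ'⟩ := Metric.eventually_nhds_iff.mp hev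
  set ε : ℝ := min (δ / 2) (1 / 2) with hε
  have hεpos : 0 < ε := by positivity
  have hεhalf : ε ≤ 1 / 2 := min_le_right _ _
  -- basic positivity on [0, ε]
  have hpos : ∀ x ∈ Set.Icc (0 : ℝ) ε, 0 < 1 + x ∧ 0 < 1 - x := by
    intro x hx
    constructor <;> [linarith [hx.1]; linarith [hx.2, hεhalf]]
  -- h3 < 0 on (0, ε)
  have h3neg : ∀ x ∈ Set.Ioo (0 : ℝ) ε, h3 x < 0 := by
    intro x hx
    apply hδ'
    have : x < δ / 2 := lt_of_lt_of_le hx.2 (min_le_left _ _)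
    rw [Real.dist_eq, sub_zero, abs_of_pos hx.1]
    linarith
  -- derivative computations
  have d2 : ∀ x ∈ Set.Icc (0 : ℝ) ε, HasDerivAt h2 (h3 x) x := by
    intro x hx
    obtain ⟨hx1, hx2⟩ := hpos x hx
    have dA := (hasDerivAt_one_add_rpow (α - 2) x hx1).const_mul (α * (α - 1))
    have dB := (hasDerivAt_one_sub_rpow (β - 2) x hx2).const_mul (β * (β - 1))
    have dC := (hasDerivAt_one_add_rpow (γ - 2) x hx1).const_mul (γ * (γ - 1))
    have := ((dA.sub dB).sub dC).sub_const (2 * q)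
    refine this.congr_deriv ?_
    simp [hh3]
    ring_nf
  have d1 : ∀ x ∈ Set.Icc (0 : ℝ) ε, HasDerivAt h1 (h2 x) x := by
    intro x hx
    obtain ⟨hx1, hx2⟩ := hpos x hx
    have dA := (hasDerivAt_one_add_rpow (α - 1) x hx1).const_mul α
    have dB := (hasDerivAt_one_sub_rpow (β - 1) x hx2).const_mul β
    have dC := (hasDerivAt_one_add_rpow (γ - 1) x hx1).const_mul γ
    have dq : HasDerivAt (fun y : ℝ => 2 * q * y) (2 * q) x := by
      simpa using (hasDerivAt_id x).const_mul (2 * q)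
    have := ((dA.add dB).sub dC).sub dq
    refine this.congr_deriv ?_
    simp [hh2]
    rw [show α - 1 - 1 = α - 2 by ring, show β - 1 - 1 = β - 2 by ring,
      show γ - 1 - 1 = γ - 2 by ring]
    ring
  have d0 : ∀ x ∈ Set.Icc (0 : ℝ) ε, HasDerivAt h (h1 x) x := by
    intro x hx
    obtain ⟨hx1, hx2⟩ := hpos x hx
    have dA := hasDerivAt_one_add_rpow α x hx1
    have dB := hasDerivAt_one_sub_rpow β x hx2
    have dC := hasDerivAt_one_add_rpow γ x hx1
    have dq : HasDerivAt (fun y : ℝ => q * y ^ 2) (q * (2 * x)) x := by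
      simpa using (hasDerivAt_pow 2 x).const_mul q
    have := (((dA.const_add 1).sub dB).sub dC).sub dq
    refine this.congr_deriv ?_
    simp [hh1]
    ring
  -- values at 0
  have h2zero : h2 0 = 0 := by
    simp [hh2, Real.one_rpow, hβ, hγ, hq]
    ring
  have h1zero : h1 0 = 0 := by
    simp [hh1, Real.one_rpow, hβ, hγ]
    ring
  have hzero : h 0 = 0 := by
    simp [hh, Real.one_rpow]
  -- cascade
  have h2neg : ∀ x ∈ Set.Ioc (0 : ℝ) ε, h2 x < 0 :=
    neg_of_deriv_neg h2 h3 hεpos d2 h2zero h3neg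
  have h1neg : ∀ x ∈ Set.Ioc (0 : ℝ) ε, h1 x < 0 :=
    neg_of_deriv_neg h1 h2 hεpos d1 h1zero
      (fun x hx => h2neg x ⟨hx.1, hx.2.le⟩)
  have hneg : ∀ x ∈ Set.Ioc (0 : ℝ) ε, h x < 0 :=
    neg_of_deriv_neg h h1 hεpos d0 hzero
      (fun x hx => h1neg x ⟨hx.1, hx.2.le⟩)
  refine ⟨ε, hεpos, fun x hx => ?_⟩
  have := hneg x ⟨hx.1, hx.2.le⟩
  simp only [hh] at this
  linarith
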